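/- arXiv:0909.3682 — 2 statements merged into one kernel-verified Lean document; each statement's English description precedes it below -/
import Mathlib

section
/- Define u(x,y) = h(x,y)/x where h(x,y) = (1/(x+y+1))·[x + x(x+1)/(2(x+y))] − ψ(x+y+1) + ψ(y+1). For fixed y > 0, u(x,y) is strictly decreasing in x on (0, 1/√2]. -/
noncomputable def psi (z : ℝ) : ℝ := deriv (fun t => Real.log (Real.Gamma t)) z

noncomputable def h (x y : ℝ) : ℝ :=
  (1 / (x + y + 1)) * (x + x * (x + 1) / (2 * (x + y))) - psi (x + y + 1) + psi (y + 1)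

noncomputable def u (x y : ℝ) : ℝ := h x y / x

open Real Set Filter Topology

lemma lg_diff {x : ℝ} (hx : 0 < x) :
    DifferentiableAt ℝ (fun t => Real.log (Real.Gamma t)) x :=
  (Real.differentiableAt_Gamma fun m =>
    ne_of_gt (lt_of_le_of_lt (neg_nonpos.mpr (Nat.cast_nonneg m)) hx)).log
    (Real.Gamma_pos_of_pos hx).ne'

lemma psi_rec {x : ℝ} (hx : 0 < x) : psi (x + 1) = psi x + 1 / x := by
  have heq : deriv (fun t => Real.log (Real.Gamma (t + 1))) x
      = deriv (fun t => Real.log (Real.Gamma t) + Real.log t) x := by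
    apply Filter.EventuallyEq.deriv_eq
    filter_upwards [eventually_gt_nhds hx] with t ht
    rw [Real.Gamma_add_one ht.ne', Real.log_mul ht.ne' (Real.Gamma_pos_of_pos ht).ne', add_comm]
  have h2 : deriv (fun t => Real.log (Real.Gamma t) + Real.log t) x
      = psi x + 1 / x := by
    rw [deriv_fun_add (lg_diff hx) (Real.differentiableAt_log hx.ne'), Real.deriv_log x, one_div, psi]
  rw [psi, ← deriv_comp_add_const (fun t => Real.log (Real.Gamma t)) 1, heq, h2]

lemma psi_mono {x z : ℝ} (hx : 0 < x) (hxz : x ≤ z) : psi x ≤ psi z := by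
  rcases eq_or_lt_of_le hxz with rfl | hlt
  · exact le_refl _
  · have hz : 0 < z := hx.trans hlt
    have hc : ConvexOn ℝ (Set.Ioi 0) (Real.log ∘ Real.Gamma) := Real.convexOn_log_Gamma
    have e : (Real.log ∘ Real.Gamma) = (fun t => Real.log (Real.Gamma t)) := rfl
    have h1 : psi x ≤ slope (Real.log ∘ Real.Gamma) x z := by
      rw [psi, ← e]
      exact hc.deriv_le_slope (Set.mem_Ioi.mpr hx) (Set.mem_Ioi.mpr hz) hlt (e ▸ lg_diff hx)
    have h2 : slope (Real.log ∘ Real.Gamma) x z ≤ psi z := by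
      rw [psi, ← e]
      exact hc.slope_le_deriv (Set.mem_Ioi.mpr hx) (Set.mem_Ioi.mpr hz) hlt (e ▸ lg_diff hz)
    exact h1.trans h2

lemma psi_hasSum {w x : ℝ} (hw : 0 < w) (hx : 0 < x) (hx1 : x ≤ 1) :
    HasSum (fun k : ℕ => 1 / (w + k) - 1 / (w + x + k)) (psi (w + x) - psi w) := by
  have hpos : ∀ k : ℕ, (0:ℝ) < w + k := fun k => by positivity
  have hpos2 : ∀ k : ℕ, (0:ℝ) < w + x + k := fun k => by
    have := hpos k; linarith
  have hnonneg : ∀ k : ℕ, 0 ≤ 1 / (w + k) - 1 / (w + x + k) := by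
    intro k
    have h1 : 1 / (w + x + k) ≤ 1 / (w + k) :=
      one_div_le_one_div_of_le (hpos k) (by linarith)
    linarith
  rw [hasSum_iff_tendsto_nat_of_nonneg hnonneg]
  have hps : ∀ n : ℕ, ∑ k ∈ Finset.range n, (1 / (w + k) - 1 / (w + x + k))
      = (psi (w + x) - psi w) - (psi (w + x + n) - psi (w + n)) := by
    intro n
    induction n with
    | zero => simp
    | succ n ih =>
      rw [Finset.sum_range_succ, ih]
      have e1 : psi (w + ↑n + 1) = psi (w + ↑n) + 1 / (w + ↑n) := psi_rec (hpos n)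
      have e2 : psi (w + x + ↑n + 1) = psi (w + x + ↑n) + 1 / (w + x + ↑n) := psi_rec (hpos2 n)
      push_cast
      rw [show w + (↑n + 1) = w + ↑n + 1 by ring, show w + x + (↑n + 1) = w + x + ↑n + 1 by ring,
        e1, e2]
      ring
  have hfun : (fun n : ℕ => ∑ k ∈ Finset.range n, (1 / (w + k) - 1 / (w + x + k)))
      = fun n : ℕ => (psi (w + x) - psi w) - (psi (w + x + n) - psi (w + n)) := funext hps
  rw [hfun]
  have htend : Tendsto (fun n : ℕ => psi (w + x + n) - psi (w + n)) atTop (𝓝 0) := by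
    have hlow : ∀ n : ℕ, 0 ≤ psi (w + x + n) - psi (w + n) := by
      intro n
      have := psi_mono (hpos n) (by linarith : w + ↑n ≤ w + x + ↑n)
      linarith
    have hupp : ∀ n : ℕ, psi (w + x + n) - psi (w + n) ≤ 1 / (w + n) := by
      intro n
      have h1 : psi (w + x + ↑n) ≤ psi (w + ↑n + 1) :=
        psi_mono (hpos2 n) (by linarith)
      have h2 : psi (w + ↑n + 1) = psi (w + ↑n) + 1 / (w + ↑n) := psi_rec (hpos n)
      linarith
    have hz : Tendsto (fun n : ℕ => 1 / (w + n)) atTop (𝓝 0) := by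
      simp only [one_div]
      exact (tendsto_atTop_add_const_left atTop w tendsto_natCast_atTop_atTop).inv_tendsto_atTop
    exact squeeze_zero hlow hupp hz
  have hconst : Tendsto (fun _ : ℕ => psi (w + x) - psi w) atTop (𝓝 (psi (w + x) - psi w)) :=
    tendsto_const_nhds
  simpa using hconst.sub htend

set_option maxHeartbeats 2000000 in
theorem stmt_11 (y : ℝ) (hy : 0 < y) :
    StrictAntiOn (fun x => u x y) (Set.Ioc 0 (1 / Real.sqrt 2)) := by
  have hs2 : (1:ℝ) < Real.sqrt 2 := by
    rw [show (1:ℝ) = Real.sqrt 1 by simp]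
    exact Real.sqrt_lt_sqrt (by norm_num) (by norm_num)
  have hsqrt2 : (1:ℝ) / Real.sqrt 2 < 1 := by
    rw [div_lt_one (by positivity)]; exact hs2
  intro a ha b hb hab
  obtain ⟨ha0, ha2⟩ := ha
  obtain ⟨hb0, hb2⟩ := hb
  have hb1 : b < 1 := lt_of_le_of_lt hb2 hsqrt2
  have ha1 : a < 1 := hab.trans hb1
  have hd : 0 < b - a := sub_pos.mpr hab
  have hbsq : b ^ 2 ≤ 1 / 2 := by
    have h1 : b ^ 2 ≤ (1 / Real.sqrt 2) ^ 2 := by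
      apply pow_le_pow_left₀ hb0.le hb2
    have h2 : (1 / Real.sqrt 2) ^ 2 = 1 / 2 := by
      rw [div_pow, one_pow, Real.sq_sqrt (by norm_num : (0:ℝ) ≤ 2)]
    linarith
  have habsq : a ^ 2 * b ^ 2 ≤ 1 / 4 := by
    have ha2b : a ^ 2 ≤ 1 / 2 := by nlinarith
    nlinarith [sq_nonneg a, sq_nonneg b]
  set w : ℝ := y + 1 with hwdef
  have hw0 : 0 < w := by simp only [hwdef]; linarith
  -- series representation
  have hSum : ∀ x : ℝ, 0 < x → x ≤ 1 →
      HasSum (fun k : ℕ => 1 / ((w + k) * (w + x + k))) ((psi (w + x) - psi w) / x) := by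
    intro x hx hx1
    have h0 := (psi_hasSum hw0 hx hx1).div_const x
    have he : (fun k : ℕ => (1 / (w + k) - 1 / (w + x + k)) / x)
        = fun k : ℕ => 1 / ((w + k) * (w + x + k)) := by
      funext k
      have hk1 : (0:ℝ) < w + k := by positivity
      have hk2 : (0:ℝ) < w + x + k := by linarith
      field_simp
      ring
    rwa [he] at h0
  have hSa := hSum a ha0 ha1.le
  have hSb := hSum b hb0 hb1.le
  -- u in terms of the series
  have hu : ∀ x : ℝ, 0 < x → x ≤ 1 →
      u x y = (1 / (x + y + 1)) * (1 + (x + 1) / (2 * (x + y)))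
        - (psi (w + x) - psi w) / x := by
    intro x hx hx1
    have hxy : 0 < x + y := by linarith
    have hxy1 : 0 < x + y + 1 := by linarith
    simp only [u, h, hwdef]
    rw [show y + 1 + x = x + y + 1 by ring]
    field_simp
    ring
  -- difference of the two series
  have hDiff : HasSum (fun k : ℕ => (b - a) * (1 / ((w + k) * (w + a + k) * (w + b + k))))
      ((psi (w + a) - psi w) / a - (psi (w + b) - psi w) / b) := by
    have h0 := hSa.sub hSb
    have he : (fun k : ℕ => 1 / ((w + k) * (w + a + k)) - 1 / ((w + k) * (w + b + k)))
        = fun k : ℕ => (b - a) * (1 / ((w + k) * (w + a + k) * (w + b + k))) := by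
      funext k
      have hk1 : (0:ℝ) < w + k := by positivity
      have hk2 : (0:ℝ) < w + a + k := by linarith
      have hk3 : (0:ℝ) < w + b + k := by linarith
      field_simp
      ring
    rwa [he] at h0
  -- the comparison function
  set F : ℝ → ℝ := fun t => (1 / (a + t + 1)) * (1 + (a + 1) / (2 * (a + t)))
      - (1 / (b + t + 1)) * (1 + (b + 1) / (2 * (b + t))) with hFdef
  have key1 : ∀ t : ℝ, 0 < t →
      (b - a) * (1 / ((t + 1) * (t + 1 + a) * (t + 1 + b))) < F t - F (t + 1) := by
    intro t ht
    have h1 : (0:ℝ) < a + t := by linarith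
    have h2 : (0:ℝ) < a + t + 1 := by linarith
    have h3 : (0:ℝ) < a + t + 2 := by linarith
    have h4 : (0:ℝ) < b + t := by linarith
    have h5 : (0:ℝ) < b + t + 1 := by linarith
    have h6 : (0:ℝ) < b + t + 2 := by linarith
    have h7 : (0:ℝ) < t + 1 := by linarith
    have h8 : (0:ℝ) < t + 1 + a := by linarith
    have h9 : (0:ℝ) < t + 1 + b := by linarith
    rw [← sub_pos]
    have hident : F t - F (t + 1) - (b - a) * (1 / ((t + 1) * (t + 1 + a) * (t + 1 + b)))
        = ((b - a) * (4 + 6*(b-a) + 2*(b-a)^2 + 12*a + 10*a*(b-a) + 10*a^2 - 2*a^2*b^2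
            + t*(12 + 10*(b-a) + 20*a + 12*a*(b-a) + 12*a^2)
            + t^2*(6 + 6*(b-a) + 12*a + 6*a*(b-a) + 6*a^2)
            + t^3*(2*(b-a) + 4*a)))
          / (2*(a+t)*(a+t+1)*(a+t+2)*(b+t)*(b+t+1)*(b+t+2)*(t+1)) := by
      simp only [hFdef]
      field_simp
      ring
    rw [hident]
    apply div_pos
    · apply mul_pos hd
      have c1 : 0 < 4 + 6*(b-a) + 2*(b-a)^2 + 12*a + 10*a*(b-a) + 10*a^2 - 2*a^2*b^2 := by
        nlinarith [mul_pos ha0 hd, sq_nonneg (b-a), sq_nonneg a]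
      have c2 : 0 ≤ t*(12 + 10*(b-a) + 20*a + 12*a*(b-a) + 12*a^2) := by
        apply mul_nonneg ht.le
        nlinarith [mul_pos ha0 hd, sq_nonneg a]
      have c3 : 0 ≤ t^2*(6 + 6*(b-a) + 12*a + 6*a*(b-a) + 6*a^2) := by
        apply mul_nonneg (sq_nonneg t)
        nlinarith [mul_pos ha0 hd, sq_nonneg a]
      have c4 : 0 ≤ t^3*(2*(b-a) + 4*a) := by
        apply mul_nonneg (pow_nonneg ht.le 3)
        nlinarith
      linarith
    · positivity
  have key2 : ∀ t : ℝ, 0 < t → 0 ≤ F t := by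
    intro t ht
    have h1 : (0:ℝ) < a + t := by linarith
    have h2 : (0:ℝ) < a + t + 1 := by linarith
    have h4 : (0:ℝ) < b + t := by linarith
    have h5 : (0:ℝ) < b + t + 1 := by linarith
    have hident : F t = ((b - a) * (1 + (b-a) + 2*a + 3*a*(b-a) + 3*a^2 + t + 2*t*(b-a)
          + 4*t*a + t^2)) / (2*(a+t)*(a+t+1)*(b+t)*(b+t+1)) := by
      simp only [hFdef]
      field_simp
      ring
    rw [hident]
    apply div_nonneg _ (by positivity)
    apply mul_nonneg hd.le
    nlinarith [mul_pos ha0 hd, sq_nonneg a, mul_pos ht hd, mul_pos ht ha0, sq_nonneg t]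
  -- terms of the series vs differences of F
  set g : ℕ → ℝ := fun k => (b - a) * (1 / ((w + k) * (w + a + k) * (w + b + k))) with hgdef
  have hgpos : ∀ k : ℕ, 0 < g k := by
    intro k
    have hk1 : (0:ℝ) < w + k := by positivity
    have hk2 : (0:ℝ) < w + a + k := by linarith
    have hk3 : (0:ℝ) < w + b + k := by linarith
    apply mul_pos hd
    positivity
  have hgF : ∀ k : ℕ, g k < F (y + k) - F (y + k + 1) := by
    intro k
    have ht : (0:ℝ) < y + k := by positivity
    have := key1 (y + k) ht
    have e1 : w + (k:ℝ) = y + k + 1 := by rw [hwdef]; ring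
    have e2 : w + a + (k:ℝ) = y + k + 1 + a := by rw [hwdef]; ring
    have e3 : w + b + (k:ℝ) = y + k + 1 + b := by rw [hwdef]; ring
    simpa only [hgdef, e1, e2, e3] using this
  -- sum the bound over the tail
  have hshift : Summable fun k : ℕ => g (k + 1) := by
    exact (summable_nat_add_iff 1).mpr hDiff.summable
  have htailbound : ∀ n : ℕ, ∑ k ∈ Finset.range n, g (k + 1) ≤ F (y + 1) := by
    intro n
    have haux : ∀ n : ℕ, ∑ k ∈ Finset.range n, g (k + 1) + F (y + ↑n + 1) ≤ F (y + 1) := by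
      intro n
      induction n with
      | zero => simp
      | succ n ih =>
        rw [Finset.sum_range_succ]
        have h1 := hgF (n + 1)
        have e : y + (↑(n + 1):ℝ) = y + ↑n + 1 := by push_cast; ring
        rw [e] at h1
        push_cast
        push_cast at ih
        rw [show y + ((n:ℝ) + 1) + 1 = y + (n:ℝ) + 1 + 1 by ring]
        linarith
    have h2 := haux n
    have h3 : 0 ≤ F (y + ↑n + 1) := key2 _ (by positivity)
    linarith
  have htail : ∑' k : ℕ, g (k + 1) ≤ F (y + 1) :=
    Real.tsum_le_of_sum_range_le (fun k => (hgpos (k + 1)).le) htailbound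
  -- total sum strictly below F y
  have hsum_lt : ∑' k : ℕ, g k < F y := by
    rw [hDiff.summable.tsum_eq_zero_add]
    have h0 := hgF 0
    have e : y + ((0:ℕ):ℝ) = y := by push_cast; ring
    rw [e] at h0
    linarith
  have htsum : ∑' k : ℕ, g k
      = (psi (w + a) - psi w) / a - (psi (w + b) - psi w) / b := hDiff.tsum_eq
  -- conclude
  have hua := hu a ha0 ha1.le
  have hub := hu b hb0 hb1.le
  have hFy : F y = (1 / (a + y + 1)) * (1 + (a + 1) / (2 * (a + y)))
      - (1 / (b + y + 1)) * (1 + (b + 1) / (2 * (b + y))) := rfl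
  simp only
  rw [hua, hub]
  rw [htsum] at hsum_lt
  rw [hFy] at hsum_lt
  have ea : a + y + 1 = a + y + 1 := rfl
  linarith [hsum_lt]
end

section
/- Define u(x,y) = h(x,y)/x where h(x,y) = (1/(x+y+1))·[x + x(x+1)/(2(x+y))] − ψ(x+y+1) + ψ(y+1). For all y > 0 and 0 < x ≤ 1/√2, u(x,y) > 0, and hence h(x,y) > 0. -/
open Real Filter

lemma diff_logGamma {z : ℝ} (hz : 0 < z) :
    DifferentiableAt ℝ (fun t => Real.log (Real.Gamma t)) z := by
  have h1 : ∀ m : ℕ, z ≠ -(m : ℝ) := by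
    intro m hm
    have : (0:ℝ) ≤ (m:ℝ) := Nat.cast_nonneg m
    nlinarith
  exact (Real.differentiableAt_Gamma h1).log (Real.Gamma_pos_of_pos hz).ne'

lemma hasDerivAt_logGamma {z : ℝ} (hz : 0 < z) :
    HasDerivAt (fun t => Real.log (Real.Gamma t)) (psi z) z :=
  (diff_logGamma hz).hasDerivAt

lemma psi_add_one {z : ℝ} (hz : 0 < z) : psi (z + 1) = psi z + 1 / z := by
  have h1 : HasDerivAt (fun t => Real.log (Real.Gamma (t + 1))) (psi (z + 1)) z := by
    have := (hasDerivAt_logGamma (by linarith : (0:ℝ) < z + 1)).comp z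
      ((hasDerivAt_id z).add_const 1)
    simpa [Function.comp_def] using this
  have h2 : HasDerivAt (fun t => Real.log t + Real.log (Real.Gamma t)) (1 / z + psi z) z := by
    have := (Real.hasDerivAt_log hz.ne').add (hasDerivAt_logGamma hz)
    simpa [one_div, Pi.add_def] using this
  have h3 : (fun t => Real.log t + Real.log (Real.Gamma t)) =ᶠ[nhds z]
      (fun t => Real.log (Real.Gamma (t + 1))) := by
    filter_upwards [eventually_gt_nhds hz] with t ht
    rw [Real.Gamma_add_one ht.ne', Real.log_mul ht.ne' (Real.Gamma_pos_of_pos ht).ne']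
  have h4 := h2.congr_of_eventuallyEq h3.symm
  have h5 := h1.unique h4
  linarith

lemma psi_le_log {z : ℝ} (hz : 0 < z) : psi z ≤ Real.log z := by
  have h := Real.convexOn_log_Gamma.deriv_le_slope (Set.mem_Ioi.mpr hz)
      (Set.mem_Ioi.mpr (by linarith : (0:ℝ) < z + 1)) (by linarith) (diff_logGamma hz)
  have hcomp : (Real.log ∘ Real.Gamma) = (fun t => Real.log (Real.Gamma t)) := rfl
  rw [hcomp, slope_def_field] at h
  have h' : psi z ≤ (Real.log (Real.Gamma (z + 1)) - Real.log (Real.Gamma z)) / (z + 1 - z) := h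
  rw [Real.Gamma_add_one hz.ne', Real.log_mul hz.ne' (Real.Gamma_pos_of_pos hz).ne',
    show z + 1 - z = (1:ℝ) by ring, div_one] at h'
  linarith

lemma log_le_psi {z : ℝ} (hz : 1 < z) : Real.log (z - 1) ≤ psi z := by
  have hz1 : (0:ℝ) < z - 1 := by linarith
  have h := Real.convexOn_log_Gamma.slope_le_deriv (Set.mem_Ioi.mpr hz1)
      (Set.mem_Ioi.mpr (by linarith : (0:ℝ) < z)) (by linarith) (diff_logGamma (by linarith))
  have hcomp : (Real.log ∘ Real.Gamma) = (fun t => Real.log (Real.Gamma t)) := rfl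
  rw [hcomp, slope_def_field] at h
  have h' : (Real.log (Real.Gamma z) - Real.log (Real.Gamma (z - 1))) / (z - (z - 1)) ≤ psi z := h
  have hzz : Real.Gamma z = (z - 1) * Real.Gamma (z - 1) := by
    have := Real.Gamma_add_one hz1.ne'
    rw [sub_add_cancel] at this
    exact this
  rw [hzz, Real.log_mul hz1.ne' (Real.Gamma_pos_of_pos hz1).ne',
    show z - (z - 1) = (1:ℝ) by ring, div_one] at h'
  linarith

lemma term_bound {a x : ℝ} (ha : 0 < a) (hx0 : 0 < x) (hx1 : x ≤ 1) :
    x / ((a + 1 - x) * (a + 1)) ≤ x / ((a + 1) * (a + 2)) + x * (x + 1) / (a * (a + 1) * (a + 2)) := by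
  have hax : 0 < a + 1 - x := by linarith
  have id1 : x / ((a + 1 - x) * (a + 1)) =
      x / ((a + 1) * (a + 2)) + x * (x + 1) / ((a + 1 - x) * (a + 1) * (a + 2)) := by
    field_simp
    ring
  rw [id1]
  have hcb : a * (a + 1) * (a + 2) ≤ (a + 1 - x) * (a + 1) * (a + 2) := by
    nlinarith [mul_pos (show (0:ℝ) < a + 1 by linarith) (show (0:ℝ) < a + 2 by linarith)]
  have := div_le_div_of_nonneg_left (show (0:ℝ) ≤ x * (x + 1) by positivity)
    (show (0:ℝ) < a * (a + 1) * (a + 2) by positivity) hcb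
  linarith

lemma gdiff {a x : ℝ} (ha : 0 < a) :
    (x / (a + 1) + x * (x + 1) / (2 * a * (a + 1))) -
      (x / (a + 2) + x * (x + 1) / (2 * (a + 1) * (a + 2)))
    = x / ((a + 1) * (a + 2)) + x * (x + 1) / (a * (a + 1) * (a + 2)) := by
  have h1 : a ≠ 0 := ha.ne'
  have h2 : a + 1 ≠ 0 := by positivity
  have h3 : a + 2 ≠ 0 := by positivity
  field_simp
  ring

lemma psi_diff_le {x y : ℝ} (hy : 0 < y) (hx0 : 0 < x) (hx1 : x ≤ 1) :
    psi (x + y + 1) - psi (y + 1) ≤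
      x / (x + y + 1) + x * (x + 1) / (2 * (x + y) * (x + y + 1)) := by
  set s := x + y with hs
  have hs0 : 0 < s := by rw [hs]; linarith
  set g : ℕ → ℝ := fun n => x / (s + n + 1) + x * (x + 1) / (2 * (s + n) * (s + n + 1)) with hg
  set R : ℕ → ℝ := fun n => psi (s + 1 + n) - psi (y + 1 + n) with hR
  have key : ∀ n : ℕ, R 0 ≤ g 0 - g n + R n := by
    intro n
    induction n with
    | zero => simp
    | succ n ih =>
      have hn0 : (0:ℝ) ≤ (n:ℝ) := Nat.cast_nonneg n
      have hsn : (0:ℝ) < s + 1 + n := by linarith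
      have hyn : (0:ℝ) < y + 1 + n := by linarith
      have ha : (0:ℝ) < s + n := by linarith
      have e1 : psi (s + 1 + ((n:ℝ) + 1)) = psi (s + 1 + n) + 1 / (s + 1 + n) := by
        rw [show s + 1 + ((n:ℝ) + 1) = (s + 1 + n) + 1 by ring, psi_add_one hsn]
      have e2 : psi (y + 1 + ((n:ℝ) + 1)) = psi (y + 1 + n) + 1 / (y + 1 + n) := by
        rw [show y + 1 + ((n:ℝ) + 1) = (y + 1 + n) + 1 by ring, psi_add_one hyn]
      have hRstep : R (n + 1) = R n - (1 / (y + 1 + n) - 1 / (s + 1 + n)) := by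
        simp only [hR]
        push_cast
        rw [e1, e2]
        ring
      have hterm : 1 / (y + 1 + (n:ℝ)) - 1 / (s + 1 + (n:ℝ)) ≤ g n - g (n + 1) := by
        have lhs_eq : 1 / (y + 1 + (n:ℝ)) - 1 / (s + 1 + (n:ℝ))
            = x / (((s + n) + 1 - x) * ((s + n) + 1)) := by
          have hyd : y + 1 + (n:ℝ) = (s + n) + 1 - x := by rw [hs]; ring
          have d1 : ((s + (n:ℝ)) + 1 - x) ≠ 0 := by
            have : (0:ℝ) < s + n + 1 - x := by rw [← hyd]; exact hyn
            intro hc; rw [hc] at this; exact lt_irrefl _ this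
          have d2 : ((s + (n:ℝ)) + 1) ≠ 0 := by positivity
          rw [hyd, show s + 1 + (n:ℝ) = s + ↑n + 1 by ring]
          field_simp
          ring
        have hne1 : (s + (n:ℝ) + 1) ≠ 0 := by positivity
        have hne2 : (s + (n:ℝ) + 2) ≠ 0 := by positivity
        have hne3 : (s + (n:ℝ)) ≠ 0 := ha.ne'
        have rhs_eq : g n - g (n + 1) = x / (((s + n) + 1) * ((s + n) + 2)) +
            x * (x + 1) / ((s + n) * ((s + n) + 1) * ((s + n) + 2)) := by
          have hh1 : g n = x / ((s + (n:ℝ)) + 1) + x * (x + 1) / (2 * (s + n) * ((s + n) + 1)) := by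
            simp only [hg]
          have hh2 : g (n + 1) = x / ((s + (n:ℝ)) + 2) + x * (x + 1) / (2 * ((s + n) + 1) * ((s + n) + 2)) := by
            simp only [hg]; push_cast; ring
          rw [hh1, hh2, gdiff ha]
        rw [lhs_eq, rhs_eq]
        exact term_bound ha hx0 hx1
      have h6 : R n ≤ R (n + 1) + (g n - g (n + 1)) := by
        rw [hRstep]
        linarith [hterm]
      linarith [ih, h6]
  have tail : ∀ n : ℕ, R n ≤ Real.log (s + 1 + n) - Real.log (y + n) := by
    intro n
    have hn0 : (0:ℝ) ≤ (n:ℝ) := Nat.cast_nonneg n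
    have h1 : psi (s + 1 + n) ≤ Real.log (s + 1 + n) := psi_le_log (by linarith)
    have h2 : Real.log (y + n) ≤ psi (y + 1 + n) := by
      have h3 := log_le_psi (z := y + 1 + n) (by linarith)
      rw [show y + 1 + (n:ℝ) - 1 = y + n by ring] at h3
      exact h3
    simp only [hR]
    linarith
  have hnat : Tendsto (fun n : ℕ => ((n:ℝ))) atTop atTop := tendsto_natCast_atTop_atTop
  have hA : Tendsto (fun n : ℕ => (x / (s + n + 1) + x * (x + 1) / (2 * (s + n) * (s + n + 1))))
      atTop (nhds 0) := by
    have h1 : Tendsto (fun n : ℕ => s + (n:ℝ) + 1) atTop atTop := by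
      apply tendsto_atTop_add_const_right
      exact tendsto_atTop_add_const_left _ _ hnat
    have h2 : Tendsto (fun n : ℕ => 2 * (s + (n:ℝ)) * (s + n + 1)) atTop atTop := by
      apply Tendsto.atTop_mul_atTop₀
      · apply Tendsto.const_mul_atTop (by norm_num : (0:ℝ) < 2)
        exact tendsto_atTop_add_const_left _ _ hnat
      · exact h1
    have t1 : Tendsto (fun n : ℕ => x / (s + n + 1)) atTop (nhds 0) := by
      simpa [div_eq_mul_inv] using tendsto_const_nhds.mul h1.inv_tendsto_atTop
    have t2 : Tendsto (fun n : ℕ => x * (x + 1) / (2 * (s + (n:ℝ)) * (s + n + 1))) atTop (nhds 0) := by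
      simpa [div_eq_mul_inv] using tendsto_const_nhds.mul h2.inv_tendsto_atTop
    simpa using t1.add t2
  have hB : Tendsto (fun n : ℕ => Real.log (s + 1 + n) - Real.log (y + n)) atTop (nhds 0) := by
    have h1 : Tendsto (fun n : ℕ => y + (n:ℝ)) atTop atTop :=
      tendsto_atTop_add_const_left _ _ hnat
    have h2 : Tendsto (fun n : ℕ => (s + 1 - y) / (y + (n:ℝ))) atTop (nhds 0) := by
      simpa [div_eq_mul_inv] using tendsto_const_nhds.mul h1.inv_tendsto_atTop
    have h3 : Tendsto (fun n : ℕ => 1 + (s + 1 - y) / (y + (n:ℝ))) atTop (nhds 1) := by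
      simpa using tendsto_const_nhds.add h2
    have hratio : Tendsto (fun n : ℕ => (s + 1 + (n:ℝ)) / (y + n)) atTop (nhds 1) := by
      apply h3.congr'
      filter_upwards [eventually_gt_atTop 0] with n hn
      have hn0 : (0:ℝ) ≤ (n:ℝ) := Nat.cast_nonneg n
      have hyn : (0:ℝ) < y + n := by linarith
      field_simp
      ring
    have hlog : Tendsto (fun n : ℕ => Real.log ((s + 1 + (n:ℝ)) / (y + n))) atTop (nhds 0) := by
      have := (Real.continuousAt_log (by norm_num : (1:ℝ) ≠ 0)).tendsto.comp hratio
      simpa [Function.comp_def] using this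
    apply hlog.congr
    intro n
    have hn0 : (0:ℝ) ≤ (n:ℝ) := Nat.cast_nonneg n
    have hyn : (0:ℝ) < y + n := by linarith
    rw [Real.log_div (by linarith) hyn.ne']
  have hC : Tendsto (fun n : ℕ => g 0 - (x / (s + n + 1) + x * (x + 1) / (2 * (s + n) * (s + n + 1)))
      + (Real.log (s + 1 + n) - Real.log (y + n))) atTop (nhds (g 0)) := by
    have h0 : Tendsto (fun _ : ℕ => g 0) atTop (nhds (g 0)) := tendsto_const_nhds
    have := (h0.sub hA).add hB
    simpa using this
  have hle : R 0 ≤ g 0 := by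
    apply ge_of_tendsto' hC
    intro n
    have hgn : g n = x / (s + n + 1) + x * (x + 1) / (2 * (s + n) * (s + n + 1)) := rfl
    calc R 0 ≤ g 0 - g n + R n := key n
      _ ≤ g 0 - g n + (Real.log (s + 1 + n) - Real.log (y + n)) := by linarith [tail n]
      _ = g 0 - (x / (s + n + 1) + x * (x + 1) / (2 * (s + n) * (s + n + 1)))
          + (Real.log (s + 1 + n) - Real.log (y + n)) := by rw [hgn]
  have hR0 : R 0 = psi (x + y + 1) - psi (y + 1) := by
    simp only [hR, hs]
    norm_num
  have hg0 : g 0 = x / (x + y + 1) + x * (x + 1) / (2 * (x + y) * (x + y + 1)) := by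
    simp only [hg, hs]
    norm_num
  rw [← hR0, ← hg0]
  exact hle

theorem stmt_12 (x y : ℝ) (hy : 0 < y) (hx0 : 0 < x) (hx : x ≤ 1 / Real.sqrt 2) :
    0 < u x y ∧ 0 < h x y := by
  have hsqrt2 : (1:ℝ) ≤ Real.sqrt 2 := by
    rw [show (1:ℝ) = Real.sqrt 1 by simp]
    exact Real.sqrt_le_sqrt (by norm_num)
  have hx1 : x ≤ 1 := hx.trans (by
    rw [div_le_one (by positivity)]
    exact hsqrt2)
  have hx2 : x ^ 2 ≤ 1 / 2 := by
    have hp : x ^ 2 ≤ (1 / Real.sqrt 2) ^ 2 := by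
      apply pow_le_pow_left₀ hx0.le hx
    rwa [div_pow, one_pow, Real.sq_sqrt (by norm_num : (0:ℝ) ≤ 2)] at hp
  have hstep := psi_diff_le (x := x) (y := y + 1) (by linarith) hx0 hx1
  have hrec1 : psi (x + y + 2) = psi (x + y + 1) + 1 / (x + y + 1) := by
    rw [show x + y + 2 = (x + y + 1) + 1 by ring, psi_add_one (by linarith)]
  have hrec2 : psi (y + 2) = psi (y + 1) + 1 / (y + 1) := by
    rw [show y + 2 = (y + 1) + 1 by ring, psi_add_one (by linarith)]
  rw [show x + (y + 1) + 1 = x + y + 2 by ring, show (y:ℝ) + 1 + 1 = y + 2 by ring,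
    show x + (y + 1) = x + y + 1 by ring] at hstep
  rw [hrec1, hrec2] at hstep
  have hkey : (x + y) * (x + y + 2) < (y + 1) * (x + y + 1 + x) := by nlinarith
  have e1 : 1 / (y + 1) - 1 / (x + y + 1) = x / ((y + 1) * (x + y + 1)) := by
    field_simp
    ring
  have e2 : x / ((y + 1) * (x + y + 1)) <
      x * (x + y + 1 + x) / ((x + y) * (x + y + 1) * (x + y + 2)) := by
    rw [div_lt_div_iff₀ (by positivity) (by positivity)]
    have hpos : (0:ℝ) < x * (x + y + 1) := by positivity
    nlinarith [mul_lt_mul_of_pos_left hkey hpos]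
  have e3 : x * (x + y + 1 + x) / ((x + y) * (x + y + 1) * (x + y + 2)) =
      x / ((x + y + 1) * (x + y + 2)) + x * (x + 1) / ((x + y) * (x + y + 1) * (x + y + 2)) := by
    field_simp
    ring
  have e4 : x / (x + y + 2) + x * (x + 1) / (2 * (x + y + 1) * (x + y + 2)) +
      (x / ((x + y + 1) * (x + y + 2)) + x * (x + 1) / ((x + y) * (x + y + 1) * (x + y + 2))) =
      (1 / (x + y + 1)) * (x + x * (x + 1) / (2 * (x + y))) := by
    field_simp
    ring
  have hh : 0 < h x y := by
    unfold h
    linarith [hstep, e1, e2, e3, e4]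
  exact ⟨div_pos hh hx0, hh⟩
end
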